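/- Fix a finite weighted metric space (V, w, d) and λ > 0, and define r_j^{(β)} as above. Set ṽ_j := w(j)·r_j^{(1/2)} and w̃_{j→i} := max(0, w(j)·(r_j^{(1/2)} − d(i,j))). Then {ṽ_j, w̃_{j→i}} is a feasible solution of the dual LP for uniform facility location: (1) Σ_{j∈V} w̃_{j→i} ≤ λ for all i ∈ V; (2) ṽ_j ≤ w(j)·d(i,j) + w̃_{j→i} for all i, j ∈ V; (3) all variables are nonnegative. -/
import Mathlib


/-- Dual feasibility: with `ṽ_j := w(j)·r_j^{(1/2)}` and
`w̃_{j→i} := max(0, w(j)·(r_j^{(1/2)} − d(i,j)))`, the pair `{ṽ_j, w̃_{j→i}}` is a feasible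
solution of the dual LP for uniform facility location with opening cost `λ`. -/
theorem stmt14 {V : Type*} [Fintype V] [MetricSpace V]
    (w : V → ℝ) (hw : ∀ j, 0 < w j) (lam : ℝ) (hlam : 0 < lam)
    (r : V → ℝ)
    (hr : ∀ j, IsLeast {t : ℝ | 0 ≤ t ∧
      lam ≤ ∑ i ∈ Finset.univ.filter (fun i => (1 / 2 : ℝ) * dist j i ≤ t),
        w i * (t - (1 / 2 : ℝ) * dist j i)} (r j)) :
    (∀ i : V, ∑ j : V, max 0 (w j * (r j - dist i j)) ≤ lam) ∧
    (∀ i j : V, w j * r j ≤ w j * dist i j + max 0 (w j * (r j - dist i j))) ∧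
    (∀ j : V, 0 ≤ w j * r j) ∧
    (∀ i j : V, 0 ≤ max 0 (w j * (r j - dist i j))) := by
  classical
  set f : V → ℝ → ℝ := fun j t => ∑ i : V, w i * max 0 (t - (1/2 : ℝ) * dist j i) with hf
  have hsum : ∀ j t, (∑ i ∈ Finset.univ.filter (fun i => (1/2:ℝ) * dist j i ≤ t),
      w i * (t - (1/2:ℝ) * dist j i)) = f j t := by
    intro j t
    rw [Finset.sum_filter]
    refine Finset.sum_congr rfl fun i _ => ?_
    by_cases h : (1/2:ℝ) * dist j i ≤ t
    · rw [if_pos h, max_eq_right (sub_nonneg.2 h)]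
    · rw [if_neg h, max_eq_left (le_of_lt (sub_neg.2 (lt_of_not_ge h))), mul_zero]
  have hmem : ∀ j, 0 ≤ r j ∧ lam ≤ f j (r j) := fun j => ⟨(hr j).1.1, (hsum j (r j)) ▸ (hr j).1.2⟩
  have hlb : ∀ j t, 0 ≤ t → lam ≤ f j t → r j ≤ t := fun j t h1 h2 =>
    (hr j).2 ⟨h1, (hsum j t).symm ▸ h2⟩
  have hcont : ∀ j, Continuous (f j) := fun j =>
    continuous_finset_sum _ fun i _ =>
      continuous_const.mul (continuous_const.max ((continuous_id.sub continuous_const)))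
  have heq : ∀ j, f j (r j) = lam := by
    intro j
    by_contra hne
    have hlt : lam < f j (r j) := lt_of_le_of_ne (hmem j).2 (Ne.symm hne)
    have hopen : IsOpen {t : ℝ | lam < f j t} := isOpen_lt continuous_const (hcont j)
    obtain ⟨ε, hε, hball⟩ := Metric.mem_nhds_iff.1 (hopen.mem_nhds hlt)
    by_cases hcase : r j - ε/2 < 0
    · have h0 : (0:ℝ) ∈ Metric.ball (r j) ε := by
        simp only [Metric.mem_ball, Real.dist_eq, abs_lt]
        constructor <;> [linarith [(hmem j).1]; linarith [(hmem j).1]]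
      have h1 : lam < f j 0 := hball h0
      have h2 : f j 0 = 0 := Finset.sum_eq_zero fun i _ => by
        rw [max_eq_left, mul_zero]
        have := dist_nonneg (x := j) (y := i); linarith
      linarith
    · push_neg at hcase
      have ht : r j - ε/2 ∈ Metric.ball (r j) ε := by
        simp only [Metric.mem_ball, Real.dist_eq, abs_lt]
        constructor <;> linarith
      have := hlb j (r j - ε/2) hcase (le_of_lt (hball ht))
      linarith
  have hlip : ∀ i j : V, r j ≤ r i + (1/2:ℝ) * dist i j := by
    intro i j
    refine hlb j _ (add_nonneg (hmem i).1 (by positivity)) ?_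
    refine le_trans (hmem i).2 (Finset.sum_le_sum fun k _ => ?_)
    refine mul_le_mul_of_nonneg_left (max_le_max le_rfl ?_) (hw k).le
    have h1 : dist j k ≤ dist j i + dist i k := dist_triangle j i k
    have h2 : dist j i = dist i j := dist_comm j i
    linarith
  refine ⟨?_, ?_, ?_, ?_⟩
  · intro i
    calc ∑ j : V, max 0 (w j * (r j - dist i j))
        ≤ ∑ j : V, w j * max 0 (r i - (1/2:ℝ) * dist i j) := by
          refine Finset.sum_le_sum fun j _ => ?_
          refine max_le (mul_nonneg (hw j).le (le_max_left _ _)) ?_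
          refine mul_le_mul_of_nonneg_left (le_trans ?_ (le_max_right _ _)) (hw j).le
          have := hlip i j; linarith
      _ = f i (r i) := rfl
      _ = lam := heq i
  · intro i j
    have h1 : w j * (r j - dist i j) ≤ max 0 (w j * (r j - dist i j)) := le_max_right _ _
    nlinarith
  · exact fun j => mul_nonneg (hw j).le (hmem j).1
  · exact fun i j => le_max_left _ _
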